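/- arXiv:2306.05649 — 5 statements merged into one kernel-verified Lean document; each statement's English description precedes it below -/
import Mathlib

section
/- Let f : ℝ → ℝ be non-increasing, let x̃ ∈ ℝ^d, θ ∈ ℝ^d, y ∈ ℝ, and ρ > 0. Then the supremum of f(xᵀθ − y) over the Euclidean ball {x ∈ ℝ^d : ‖x − x̃‖₂ ≤ ρ} equals f(x̃ᵀθ − y − ρ‖θ‖₂), and this supremum is attained. -/
open RealInnerProductSpace

/-- If `f : ℝ → ℝ` is non-increasing, then the supremum of `f (xᵀθ - y)` over the
Euclidean ball of radius `ρ > 0` centered at `xt` equals `f (xtᵀθ - y - ρ‖θ‖)`,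
and this supremum is attained. -/
theorem sup_nonincreasing_loss_ball {d : ℕ} (f : ℝ → ℝ)
    (hf : ∀ a b : ℝ, a ≤ b → f b ≤ f a)
    (xt θ : EuclideanSpace ℝ (Fin d)) (y ρ : ℝ) (hρ : 0 < ρ) :
    sSup ((fun x => f (⟪x, θ⟫ - y)) '' Metric.closedBall xt ρ)
        = f (⟪xt, θ⟫ - y - ρ * ‖θ‖) ∧
      IsGreatest ((fun x => f (⟪x, θ⟫ - y)) '' Metric.closedBall xt ρ)
        (f (⟪xt, θ⟫ - y - ρ * ‖θ‖)) := by
  have hg : IsGreatest ((fun x => f (⟪x, θ⟫ - y)) '' Metric.closedBall xt ρ)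
      (f (⟪xt, θ⟫ - y - ρ * ‖θ‖)) := by
    constructor
    · by_cases hθ : θ = 0
      · refine ⟨xt, Metric.mem_closedBall_self hρ.le, ?_⟩
        simp [hθ]
      · refine ⟨xt - (ρ / ‖θ‖) • θ, ?_, ?_⟩
        · have hθn : (0:ℝ) < ‖θ‖ := norm_pos_iff.mpr hθ
          simp only [Metric.mem_closedBall, dist_eq_norm]
          rw [sub_sub_cancel_left, norm_neg, norm_smul]
          rw [Real.norm_eq_abs, abs_of_pos (by positivity)]
          rw [div_mul_cancel₀ _ hθn.ne']
        · have hθn : (0:ℝ) < ‖θ‖ := norm_pos_iff.mpr hθ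
          simp only [inner_sub_left, inner_smul_left, real_inner_self_eq_norm_sq,
            RCLike.star_def, conj_trivial]
          congr 1
          field_simp
          ring
    · rintro v ⟨x, hx, rfl⟩
      apply hf
      have h1 : ⟪xt - x, θ⟫ ≤ ρ * ‖θ‖ := by
        calc ⟪xt - x, θ⟫ ≤ ‖xt - x‖ * ‖θ‖ := real_inner_le_norm _ _
          _ ≤ ρ * ‖θ‖ := by
              apply mul_le_mul_of_nonneg_right _ (norm_nonneg _)
              rw [← dist_eq_norm, dist_comm]
              exact hx
      have : ⟪xt, θ⟫ - ⟪x, θ⟫ ≤ ρ * ‖θ‖ := by rwa [← inner_sub_left]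
      linarith
  exact ⟨hg.csSup_eq, hg⟩
end

section
/- Let f : ℝ → ℝ satisfy f(z) = f(|z|) for all z ∈ ℝ and be non-decreasing on ℝ₊ (i.e., 0 ≤ a ≤ b implies f(a) ≤ f(b)). Let x̃ ∈ ℝ^d, θ ∈ ℝ^d, y ∈ ℝ, and ρ > 0. Then the supremum of f(xᵀθ − y) over the Euclidean ball {x ∈ ℝ^d : ‖x − x̃‖₂ ≤ ρ} equals f(|x̃ᵀθ − y| + ρ‖θ‖₂), and this supremum is attained. -/
open RealInnerProductSpace

/-- If `f : ℝ → ℝ` satisfies `f z = f |z|` and is non-decreasing on `ℝ₊`, then the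
supremum of `f (xᵀθ - y)` over the Euclidean ball of radius `ρ > 0` centered at `xt`
equals `f (|xtᵀθ - y| + ρ‖θ‖)`, and this supremum is attained. -/
theorem sup_abs_nondecreasing_loss_ball {d : ℕ} (f : ℝ → ℝ)
    (hf_abs : ∀ z : ℝ, f z = f |z|)
    (hf_mono : ∀ a b : ℝ, 0 ≤ a → a ≤ b → f a ≤ f b)
    (xt θ : EuclideanSpace ℝ (Fin d)) (y ρ : ℝ) (hρ : 0 < ρ) :
    sSup ((fun x => f (⟪x, θ⟫ - y)) '' Metric.closedBall xt ρ)
        = f (|⟪xt, θ⟫ - y| + ρ * ‖θ‖) ∧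
      IsGreatest ((fun x => f (⟪x, θ⟫ - y)) '' Metric.closedBall xt ρ)
        (f (|⟪xt, θ⟫ - y| + ρ * ‖θ‖)) := by
  set c : ℝ := ⟪xt, θ⟫ - y with hc
  have hub : ∀ z ∈ (fun x => f (⟪x, θ⟫ - y)) '' Metric.closedBall xt ρ,
      z ≤ f (|c| + ρ * ‖θ‖) := by
    rintro z ⟨x, hx, rfl⟩
    have hdist : ‖x - xt‖ ≤ ρ := by
      simpa [dist_eq_norm] using (Metric.mem_closedBall.mp hx)
    have h1 : |⟪x, θ⟫ - y| ≤ |c| + ρ * ‖θ‖ := by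
      have hdecomp : ⟪x, θ⟫ - y = c + ⟪x - xt, θ⟫ := by
        rw [hc, inner_sub_left]; ring
      rw [hdecomp]
      calc |c + ⟪x - xt, θ⟫| ≤ |c| + |⟪x - xt, θ⟫| := abs_add_le _ _
        _ ≤ |c| + ρ * ‖θ‖ := by
            have := abs_real_inner_le_norm (x - xt) θ
            have h2 : ‖x - xt‖ * ‖θ‖ ≤ ρ * ‖θ‖ :=
              mul_le_mul_of_nonneg_right hdist (norm_nonneg _)
            linarith
    calc f (⟪x, θ⟫ - y) = f |⟪x, θ⟫ - y| := hf_abs _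
      _ ≤ f (|c| + ρ * ‖θ‖) := hf_mono _ _ (abs_nonneg _) h1
  have hmem : f (|c| + ρ * ‖θ‖) ∈ (fun x => f (⟪x, θ⟫ - y)) '' Metric.closedBall xt ρ := by
    by_cases hθ : θ = 0
    · refine ⟨xt, Metric.mem_closedBall_self hρ.le, ?_⟩
      have hcy : c = -y := by simp [hc, hθ]
      simp only [hθ, inner_zero_right, zero_sub, norm_zero, mul_zero, add_zero, hcy]
      exact hf_abs (-y)
    · have hθn : (0:ℝ) < ‖θ‖ := norm_pos_iff.mpr hθ
      set s : ℝ := if 0 ≤ c then 1 else -1 with hs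
      refine ⟨xt + ((s * ρ) / ‖θ‖) • θ, ?_, ?_⟩
      · have hsabs : |s| = 1 := by
          rw [hs]; split_ifs <;> simp
        have : ‖((s * ρ) / ‖θ‖) • θ‖ = ρ := by
          rw [norm_smul]
          rw [Real.norm_eq_abs, abs_div, abs_mul, hsabs, abs_of_pos hρ, abs_of_pos hθn]
          field_simp
        simp [Metric.mem_closedBall, dist_eq_norm, this]
      · have hin : ⟪xt + ((s * ρ) / ‖θ‖) • θ, θ⟫ - y = c + s * ρ * ‖θ‖ := by
          rw [inner_add_left, real_inner_smul_left, real_inner_self_eq_norm_sq]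
          rw [hc]
          field_simp
          ring
        simp only [hin]
        have habs : |c + s * ρ * ‖θ‖| = |c| + ρ * ‖θ‖ := by
          rw [hs]
          split_ifs with h
          · rw [abs_of_nonneg h, abs_of_nonneg] <;> nlinarith [mul_pos hρ hθn]
          · push_neg at h
            rw [abs_of_neg h, abs_of_nonpos] <;> nlinarith [mul_pos hρ hθn]
        rw [hf_abs (c + s * ρ * ‖θ‖), habs]
  have hgr : IsGreatest ((fun x => f (⟪x, θ⟫ - y)) '' Metric.closedBall xt ρ)
      (f (|c| + ρ * ‖θ‖)) := ⟨hmem, hub⟩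
  exact ⟨hgr.csSup_eq, hgr⟩
end

section
/- Let X ⊆ ℝ^d be nonempty and compact, let f : ℝ → ℝ be non-increasing, and let θ ∈ ℝ^d, y ∈ ℝ, c ∈ ℝ. Then sup_{x ∈ X} f(xᵀθ − y) ≤ c if and only if there exists z ∈ ℝ such that S_X(−θ) + y ≤ −z and f(z) ≤ c, where S_X is the support function of X. -/
open RealInnerProductSpace

/-- For `X ⊆ ℝ^d` nonempty compact and `f` non-increasing,
`sup_{x ∈ X} f (xᵀθ - y) ≤ c` iff there exists `z` with `S_X(-θ) + y ≤ -z` and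
`f z ≤ c`, where `S_X(θ) = sup_{x ∈ X} xᵀθ`. -/
theorem robust_constraint_nonincreasing_iff {d : ℕ} (X : Set (EuclideanSpace ℝ (Fin d)))
    (hX : X.Nonempty) (hXc : IsCompact X) (f : ℝ → ℝ)
    (hf : ∀ a b : ℝ, a ≤ b → f b ≤ f a)
    (θ : EuclideanSpace ℝ (Fin d)) (y c : ℝ) :
    sSup ((fun x => f (⟪x, θ⟫ - y)) '' X) ≤ c ↔
      ∃ z : ℝ, sSup ((fun x => ⟪x, -θ⟫) '' X) + y ≤ -z ∧ f z ≤ c := by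
  have hcont : Continuous fun x : EuclideanSpace ℝ (Fin d) => (⟪x, -θ⟫ : ℝ) :=
    continuous_id.inner continuous_const
  obtain ⟨x₀, hx₀X, hx₀⟩ := hXc.exists_isMaxOn hX hcont.continuousOn
  have hmin : ∀ x ∈ X, ⟪x₀, θ⟫ ≤ (⟪x, θ⟫ : ℝ) := by
    intro x hx
    have := hx₀ hx
    simp only [Set.mem_setOf_eq, inner_neg_right] at this
    linarith
  have hS : sSup ((fun x => (⟪x, -θ⟫ : ℝ)) '' X) = ⟪x₀, -θ⟫ := by
    apply IsGreatest.csSup_eq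
    exact ⟨⟨x₀, hx₀X, rfl⟩, by rintro _ ⟨x, hx, rfl⟩; exact hx₀ hx⟩
  have hF : sSup ((fun x => f (⟪x, θ⟫ - y)) '' X) = f (⟪x₀, θ⟫ - y) := by
    apply IsGreatest.csSup_eq
    refine ⟨⟨x₀, hx₀X, rfl⟩, ?_⟩
    rintro _ ⟨x, hx, rfl⟩
    exact hf _ _ (by linarith [hmin x hx])
  rw [hS, hF]
  constructor
  · intro h
    refine ⟨⟪x₀, θ⟫ - y, ?_, h⟩
    simp [inner_neg_right]
  · rintro ⟨z, hz, hfz⟩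
    have : z ≤ ⟪x₀, θ⟫ - y := by
      simp only [inner_neg_right] at hz; linarith
    exact le_trans (hf _ _ this) hfz
end

section
/- Let X ⊆ ℝ^d be nonempty and compact, let f : ℝ → ℝ satisfy f(z) = f(|z|) for all z ∈ ℝ and be non-decreasing on ℝ₊, and let θ ∈ ℝ^d, y ∈ ℝ, c ∈ ℝ. Then sup_{x ∈ X} f(xᵀθ − y) ≤ c if and only if there exists z ∈ ℝ such that S_X(θ) − y ≤ z, S_X(−θ) + y ≤ z, and f(z) ≤ c, where S_X is the support function of X. -/
open RealInnerProductSpace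

/-- For `X ⊆ ℝ^d` nonempty compact and `f` with `f z = f |z|`, non-decreasing on `ℝ₊`,
`sup_{x ∈ X} f (xᵀθ - y) ≤ c` iff there exists `z` with `S_X(θ) - y ≤ z`,
`S_X(-θ) + y ≤ z`, and `f z ≤ c`, where `S_X(θ) = sup_{x ∈ X} xᵀθ`. -/
theorem robust_constraint_abs_nondecreasing_iff {d : ℕ} (X : Set (EuclideanSpace ℝ (Fin d)))
    (hX : X.Nonempty) (hXc : IsCompact X) (f : ℝ → ℝ)
    (hf_abs : ∀ z : ℝ, f z = f |z|)
    (hf_mono : ∀ a b : ℝ, 0 ≤ a → a ≤ b → f a ≤ f b)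
    (θ : EuclideanSpace ℝ (Fin d)) (y c : ℝ) :
    sSup ((fun x => f (⟪x, θ⟫ - y)) '' X) ≤ c ↔
      ∃ z : ℝ, sSup ((fun x => ⟪x, θ⟫) '' X) - y ≤ z ∧
        sSup ((fun x => ⟪x, -θ⟫) '' X) + y ≤ z ∧ f z ≤ c := by
  have hg : Continuous (fun x : EuclideanSpace ℝ (Fin d) => ⟪x, θ⟫) :=
    Continuous.inner continuous_id continuous_const
  have hg' : Continuous (fun x : EuclideanSpace ℝ (Fin d) => ⟪x, -θ⟫) :=
    Continuous.inner continuous_id continuous_const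
  obtain ⟨x₀, hx₀X, hx₀⟩ := hXc.exists_isMaxOn hX hg.continuousOn
  obtain ⟨x₁, hx₁X, hx₁⟩ := hXc.exists_isMaxOn hX hg'.continuousOn
  have hS : sSup ((fun x => ⟪x, θ⟫) '' X) = ⟪x₀, θ⟫ := by
    refine IsGreatest.csSup_eq ⟨⟨x₀, hx₀X, rfl⟩, ?_⟩
    rintro _ ⟨x, hx, rfl⟩; exact hx₀ hx
  have hS' : sSup ((fun x => ⟪x, -θ⟫) '' X) = ⟪x₁, -θ⟫ := by
    refine IsGreatest.csSup_eq ⟨⟨x₁, hx₁X, rfl⟩, ?_⟩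
    rintro _ ⟨x, hx, rfl⟩; exact hx₁ hx
  set z : ℝ := max (⟪x₀, θ⟫ - y) (⟪x₁, -θ⟫ + y) with hz_def
  obtain ⟨p, hp⟩ := id hX
  have hp0 : ⟪p, θ⟫ ≤ ⟪x₀, θ⟫ := hx₀ hp
  have hp1 : ⟪p, -θ⟫ ≤ ⟪x₁, -θ⟫ := hx₁ hp
  have hneg : ∀ x : EuclideanSpace ℝ (Fin d), ⟪x, -θ⟫ = -⟪x, θ⟫ := fun x => by
    simp [inner_neg_right]
  have hz0 : (0:ℝ) ≤ z := by
    have h1 : ⟪p, θ⟫ - y ≤ z := le_trans (by linarith) (le_max_left _ _)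
    have h2 : -⟪p, θ⟫ + y ≤ z := by
      rw [← hneg]; exact le_trans (by linarith) (le_max_right _ _)
    linarith
  have hbound : ∀ x ∈ X, |⟪x, θ⟫ - y| ≤ z := by
    intro x hx
    rw [abs_le]
    constructor
    · have hl : ⟪x, -θ⟫ ≤ ⟪x₁, -θ⟫ := hx₁ hx
      rw [hneg, hneg] at hl
      have h2 : -⟪x, θ⟫ + y ≤ z :=
        le_trans (by rw [← hneg x₁] at hl; linarith [hneg x₁]) (le_max_right _ _)
      linarith
    · have hu : ⟪x, θ⟫ ≤ ⟪x₀, θ⟫ := hx₀ hx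
      exact le_trans (by linarith) (le_max_left _ _)
  have hfle : ∀ x ∈ X, f (⟪x, θ⟫ - y) ≤ f z := fun x hx => by
    rw [hf_abs]; exact hf_mono _ _ (abs_nonneg _) (hbound x hx)
  have hba : BddAbove ((fun x => f (⟪x, θ⟫ - y)) '' X) :=
    ⟨f z, by rintro _ ⟨x, hx, rfl⟩; exact hfle x hx⟩
  constructor
  · intro h
    refine ⟨z, ?_, ?_, ?_⟩
    · rw [hS]; exact le_max_left _ _
    · rw [hS']; exact le_max_right _ _
    · rcases le_total (⟪x₀, θ⟫ - y) (⟪x₁, -θ⟫ + y) with hc | hc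
      · have hz : z = -(⟪x₁, θ⟫ - y) := by rw [hz_def, max_eq_right hc, hneg]; ring
        have habs : z = |⟪x₁, θ⟫ - y| := by
          rw [abs_of_nonpos (by linarith), hz]
        have : f z = f (⟪x₁, θ⟫ - y) := by rw [habs, ← hf_abs]
        rw [this]
        exact le_trans (le_csSup hba ⟨x₁, hx₁X, rfl⟩) h
      · have hz : z = ⟪x₀, θ⟫ - y := by rw [hz_def, max_eq_left hc]
        rw [hz]
        exact le_trans (le_csSup hba ⟨x₀, hx₀X, rfl⟩) h
  · rintro ⟨w, h1, h2, h3⟩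
    apply csSup_le (hX.image _)
    rintro _ ⟨x, hx, rfl⟩
    have habs : |⟪x, θ⟫ - y| ≤ w := by
      rw [abs_le]
      have hu : ⟪x, θ⟫ ≤ ⟪x₀, θ⟫ := hx₀ hx
      have hl : ⟪x, -θ⟫ ≤ ⟪x₁, -θ⟫ := hx₁ hx
      rw [hneg, hneg] at hl
      rw [hS] at h1; rw [hS', hneg] at h2
      constructor <;> linarith
    calc f (⟪x, θ⟫ - y) = f |⟪x, θ⟫ - y| := hf_abs _
      _ ≤ f w := hf_mono _ _ (abs_nonneg _) habs
      _ ≤ c := h3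
end

section
/- Let Θ ⊆ ℝ^d be nonempty, let X₁, …, Xₙ ⊆ ℝ^d be nonempty compact sets, let y ∈ ℝⁿ, and let f : ℝ → ℝ satisfy f(z) = f(|z|) for all z ∈ ℝ and be non-decreasing on ℝ₊. Then the optimal value of the robust ERM problem: minimize Σ_{i=1}^n sup_{x_i ∈ X_i} f(x_iᵀθ − y_i) over θ ∈ Θ, equals the optimal value of the problem: minimize Σ_{i=1}^n f(z_i) over (θ, z) ∈ Θ × ℝⁿ subject to S_{X_i}(θ) − y_i ≤ z_i and S_{X_i}(−θ) + y_i ≤ z_i for i = 1, …, n, where S_{X_i} is the support function of X_i. -/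
open RealInnerProductSpace

/-- For nonempty `Θ ⊆ ℝ^d`, nonempty compact `X₁, …, Xₙ ⊆ ℝ^d`, `y ∈ ℝⁿ`, and
`f : ℝ → ℝ` with `f z = f |z|` and non-decreasing on `ℝ₊`, the optimal value of the
robust ERM problem `minimize Σᵢ sup_{xᵢ ∈ Xᵢ} f (xᵢᵀθ - yᵢ)` over `θ ∈ Θ` equals the
optimal value of `minimize Σᵢ f (zᵢ)` over `θ ∈ Θ`, `z ∈ ℝⁿ` subject to
`S_{Xᵢ}(θ) - yᵢ ≤ zᵢ` and `S_{Xᵢ}(-θ) + yᵢ ≤ zᵢ`,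
where `S_{Xᵢ}(θ) = sup_{x ∈ Xᵢ} xᵀθ`. -/
theorem rerm_reformulation_abs_nondecreasing {d n : ℕ}
    (Θ : Set (EuclideanSpace ℝ (Fin d))) (hΘ : Θ.Nonempty)
    (X : Fin n → Set (EuclideanSpace ℝ (Fin d)))
    (hX : ∀ i, (X i).Nonempty) (hXc : ∀ i, IsCompact (X i))
    (y : Fin n → ℝ) (f : ℝ → ℝ)
    (hf_abs : ∀ z : ℝ, f z = f |z|)
    (hf_mono : ∀ a b : ℝ, 0 ≤ a → a ≤ b → f a ≤ f b) :
    sInf ((fun θ => ∑ i, sSup ((fun x => f (⟪x, θ⟫ - y i)) '' X i)) '' Θ)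
      = sInf {v : ℝ | ∃ θ ∈ Θ, ∃ z : Fin n → ℝ,
          (∀ i, sSup ((fun x => ⟪x, θ⟫) '' X i) - y i ≤ z i) ∧
          (∀ i, sSup ((fun x => ⟪x, -θ⟫) '' X i) + y i ≤ z i) ∧
          v = ∑ i, f (z i)} := by
  classical
  -- notation
  set S : EuclideanSpace ℝ (Fin d) → Fin n → ℝ :=
    fun θ i => sSup ((fun x => ⟪x, θ⟫) '' X i) with hS
  set c : EuclideanSpace ℝ (Fin d) → Fin n → ℝ :=
    fun θ i => max (S θ i - y i) (S (-θ) i + y i) with hc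
  have hcont : ∀ θ (i : Fin n), ContinuousOn (fun x : EuclideanSpace ℝ (Fin d) => ⟪x, θ⟫) (X i) :=
    fun θ i => (continuous_id.inner continuous_const).continuousOn
  -- the sup S θ i is attained and is an upper bound
  have hSatt : ∀ θ (i : Fin n), ∃ x ∈ X i, S θ i = ⟪x, θ⟫ ∧ ∀ x' ∈ X i, ⟪x', θ⟫ ≤ S θ i := by
    intro θ i
    obtain ⟨x, hx, hx1, hx2⟩ := (hXc i).exists_sSup_image_eq_and_ge (hX i) (hcont θ i)
    exact ⟨x, hx, hx1, fun x' hx' => (hx2 x' hx').trans hx1.ge⟩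
  have hSneg : ∀ θ (i : Fin n),
      sSup ((fun x => ⟪x, -θ⟫) '' X i) = S (-θ) i := fun θ i => rfl
  have hc0 : ∀ θ (i : Fin n), 0 ≤ c θ i := by
    intro θ i
    obtain ⟨x0, hx0⟩ := hX i
    obtain ⟨x1, hx1, hx1e, hx1b⟩ := hSatt θ i
    obtain ⟨x2, hx2, hx2e, hx2b⟩ := hSatt (-θ) i
    by_contra h
    push_neg at h
    have h1 : S θ i - y i < 0 := lt_of_le_of_lt (le_max_left _ _) h
    have h2 : S (-θ) i + y i < 0 := lt_of_le_of_lt (le_max_right _ _) h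
    have hb1 := hx1b x0 hx0
    have hb2 := hx2b x0 hx0
    rw [inner_neg_right] at hb2
    linarith
  -- the inner sup equals f (c θ i)
  have key : ∀ θ (i : Fin n),
      sSup ((fun x => f (⟪x, θ⟫ - y i)) '' X i) = f (c θ i) := by
    intro θ i
    obtain ⟨x1, hx1, hx1e, hx1b⟩ := hSatt θ i
    obtain ⟨x2, hx2, hx2e, hx2b⟩ := hSatt (-θ) i
    have hub : ∀ x ∈ X i, f (⟪x, θ⟫ - y i) ≤ f (c θ i) := by
      intro x hx
      rw [hf_abs (⟪x, θ⟫ - y i)]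
      refine hf_mono _ _ (abs_nonneg _) (abs_le.2 ⟨?_, ?_⟩)
      · have := hx2b x hx
        rw [inner_neg_right] at this
        have : -(S (-θ) i + y i) ≤ ⟪x, θ⟫ - y i := by linarith
        exact le_trans (neg_le_neg (le_max_right _ _)) this
      · exact le_trans (by linarith [hx1b x hx]) (le_max_left _ _)
    have hmem : f (c θ i) ∈ (fun x => f (⟪x, θ⟫ - y i)) '' X i := by
      rcases max_cases (S θ i - y i) (S (-θ) i + y i) with ⟨he, _⟩ | ⟨he, _⟩
      · refine ⟨x1, hx1, ?_⟩
        show f (⟪x1, θ⟫ - y i) = f (c θ i)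
        have : ⟪x1, θ⟫ - y i = c θ i := by rw [hc]; simp only; rw [he, ← hx1e]
        rw [this]
      · refine ⟨x2, hx2, ?_⟩
        have hx2e' : S (-θ) i = -⟪x2, θ⟫ := by rw [hx2e, inner_neg_right]
        have : ⟪x2, θ⟫ - y i = -(c θ i) := by
          rw [hc]; simp only; rw [he, hx2e']; ring
        show f (⟪x2, θ⟫ - y i) = f (c θ i)
        rw [this, hf_abs (-(c θ i)), abs_neg, abs_of_nonneg (hc0 θ i)]
    exact le_antisymm (csSup_le ⟨_, hmem⟩ (fun b ⟨x, hx, hxe⟩ => hxe ▸ hub x hx))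
      (le_csSup ⟨f (c θ i), fun b ⟨x, hx, hxe⟩ => hxe ▸ hub x hx⟩ hmem)
  -- set A and B
  set A := (fun θ => ∑ i, sSup ((fun x => f (⟪x, θ⟫ - y i)) '' X i)) '' Θ with hAdef
  set B := {v : ℝ | ∃ θ ∈ Θ, ∃ z : Fin n → ℝ,
          (∀ i, sSup ((fun x => ⟪x, θ⟫) '' X i) - y i ≤ z i) ∧
          (∀ i, sSup ((fun x => ⟪x, -θ⟫) '' X i) + y i ≤ z i) ∧
          v = ∑ i, f (z i)} with hBdef
  have hAB : A ⊆ B := by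
    rintro v ⟨θ, hθ, rfl⟩
    refine ⟨θ, hθ, c θ, fun i => le_max_left _ _, fun i => le_max_right _ _, ?_⟩
    exact Finset.sum_congr rfl fun i _ => key θ i
  have hdom : ∀ v ∈ B, ∃ w ∈ A, w ≤ v := by
    rintro v ⟨θ, hθ, z, hz1, hz2, rfl⟩
    refine ⟨_, ⟨θ, hθ, rfl⟩, ?_⟩
    refine Finset.sum_le_sum fun i _ => ?_
    rw [key θ i]
    exact hf_mono _ _ (hc0 θ i) (max_le (hz1 i) (hz2 i))
  have hAne : A.Nonempty := hΘ.image _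
  have hBne : B.Nonempty := hAne.mono hAB
  by_cases hbdd : BddBelow B
  · refine le_antisymm (le_csInf hBne fun v hv => ?_) (csInf_le_csInf hbdd hAne hAB)
    obtain ⟨w, hw, hwv⟩ := hdom v hv
    exact (csInf_le (hbdd.mono hAB) hw).trans hwv
  · have hAnb : ¬ BddBelow A := by
      intro ⟨b, hb⟩
      exact hbdd ⟨b, fun v hv => by obtain ⟨w, hw, hwv⟩ := hdom v hv; exact (hb hw).trans hwv⟩
    rw [Real.sInf_of_not_bddBelow hAnb, Real.sInf_of_not_bddBelow hbdd]
end
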